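/- In ℓ∞², the pair ((1,1), (1,1)) is not a CPP: for every r > 0 and μ > 0 there exist a unit vector z Birkhoff-James orthogonal to (1,1), a unit vector w Birkhoff-James orthogonal to (1,1), and scalars a, b with a·(1,1) + b·z ∈ B((1,1), r) ∩ S, but ‖a·(1,1) + bμ·w‖ > 1. -/

import Mathlib

open Metric

/-- Birkhoff-James orthogonality: `x ⊥_B y` iff `‖x + t y‖ ≥ ‖x‖` for all real `t`. -/
def BJOrth {X : Type*} [NormedAddCommGroup X] [NormedSpace ℝ X] (x y : X) : Prop :=
  ∀ t : ℝ, ‖x‖ ≤ ‖x + t • y‖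

/-- `(x, y)` is a compatible point pair with constant `(r, μ)`. -/
def IsCPPConst {X Y : Type*} [NormedAddCommGroup X] [NormedSpace ℝ X]
    [NormedAddCommGroup Y] [NormedSpace ℝ Y] (x : X) (y : Y) (r μ : ℝ) : Prop :=
  ∀ z : X, ‖z‖ = 1 → BJOrth x z → ∀ w : Y, ‖w‖ = 1 → BJOrth y w →
    ∀ a b : ℝ, ‖a • x + b • z - x‖ ≤ r → ‖a • x + b • z‖ = 1 →
      ‖a • y + (b * μ) • w‖ ≤ 1

/-- `(x, y)` is a compatible point pair (CPP). -/
def IsCPP {X Y : Type*} [NormedAddCommGroup X] [NormedSpace ℝ X]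
    [NormedAddCommGroup Y] [NormedSpace ℝ Y] (x : X) (y : Y) : Prop :=
  ∃ r > 0, ∃ μ > 0, IsCPPConst x y r μ

/-- `(x, y)` is a weakly compatible point pair (weak CPP). -/
def IsWeakCPP {X Y : Type*} [NormedAddCommGroup X] [NormedSpace ℝ X]
    [NormedAddCommGroup Y] [NormedSpace ℝ Y] (x : X) (y : Y) : Prop :=
  ∃ z : X, ‖z‖ = 1 ∧ BJOrth x z ∧ ∃ w : Y, ‖w‖ = 1 ∧ BJOrth y w ∧
    ∃ r > 0, ∃ μ > 0, ∀ a b : ℝ, ‖a • x + b • z - x‖ ≤ r → ‖a • x + b • z‖ = 1 →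
      ‖a • y + (b * μ) • w‖ ≤ 1

/-- A normed space is smooth if every unit vector has a unique supporting functional. -/
def SmoothSp (X : Type*) [NormedAddCommGroup X] [NormedSpace ℝ X] : Prop :=
  ∀ x : X, ‖x‖ = 1 → ∃! f : X →L[ℝ] ℝ, ‖f‖ = 1 ∧ f x = 1

noncomputable abbrev Linf2 := PiLp ⊤ (fun _ : Fin 2 => ℝ)

lemma linf_norm (x : Linf2) : ‖x‖ = max ‖x 0‖ ‖x 1‖ := by
  rw [PiLp.norm_eq_ciSup]
  apply le_antisymm
  · exact ciSup_le fun i => by fin_cases i <;> simp [le_max_left, le_max_right]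
  · have h : BddAbove (Set.range fun i : Fin 2 => ‖x i‖) :=
      Set.Finite.bddAbove (Set.finite_range _)
    exact max_le (le_ciSup h 0) (le_ciSup h 1)

theorem stmt2 :
    ∀ r : ℝ, 0 < r → ∀ μ : ℝ, 0 < μ →
      ∃ z : Linf2, ‖z‖ = 1 ∧ BJOrth ((WithLp.equiv ⊤ (Fin 2 → ℝ)).symm ![1, 1]) z ∧
      ∃ w : Linf2, ‖w‖ = 1 ∧ BJOrth ((WithLp.equiv ⊤ (Fin 2 → ℝ)).symm ![1, 1]) w ∧
      ∃ a b : ℝ,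
        ‖a • ((WithLp.equiv ⊤ (Fin 2 → ℝ)).symm ![1, 1] : Linf2) + b • z -
          (WithLp.equiv ⊤ (Fin 2 → ℝ)).symm ![1, 1]‖ ≤ r ∧
        ‖a • ((WithLp.equiv ⊤ (Fin 2 → ℝ)).symm ![1, 1] : Linf2) + b • z‖ = 1 ∧
        1 < ‖a • ((WithLp.equiv ⊤ (Fin 2 → ℝ)).symm ![1, 1] : Linf2) + (b * μ) • w‖ := by
  intro r hr μ hμ
  set e := min r 1 with he
  have he0 : 0 < e := lt_min hr one_pos
  have he1 : e ≤ 1 := min_le_right r 1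
  have her : e ≤ r := min_le_left r 1
  refine ⟨(WithLp.equiv ⊤ (Fin 2 → ℝ)).symm ![1, 0], ?_, ?_,
    (WithLp.equiv ⊤ (Fin 2 → ℝ)).symm ![0, -1], ?_, ?_, 1, -e, ?_, ?_, ?_⟩
  · rw [linf_norm]; simp
  · intro t
    rw [linf_norm, linf_norm]
    simp only [PiLp.add_apply, PiLp.smul_apply, WithLp.equiv_symm_apply, PiLp.toLp_apply,
      Matrix.cons_val_zero, Matrix.cons_val_one, Matrix.head_cons, smul_eq_mul,
      mul_zero, mul_one, add_zero]
    simp only [Real.norm_eq_abs]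
    norm_num
  · rw [linf_norm]; simp
  · intro t
    rw [linf_norm, linf_norm]
    simp only [PiLp.add_apply, PiLp.smul_apply, WithLp.equiv_symm_apply, PiLp.toLp_apply,
      Matrix.cons_val_zero, Matrix.cons_val_one, Matrix.head_cons, smul_eq_mul,
      mul_zero, mul_one, add_zero]
    simp only [Real.norm_eq_abs]
    norm_num
  · rw [linf_norm]
    simp only [PiLp.add_apply, PiLp.sub_apply, PiLp.smul_apply, WithLp.equiv_symm_apply, PiLp.toLp_apply,
      Matrix.cons_val_zero, Matrix.cons_val_one, Matrix.head_cons, smul_eq_mul,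
      mul_zero, mul_one, one_mul, add_zero, Real.norm_eq_abs]
    rw [show (1 : ℝ) + -e - 1 = -e by ring, show (1 : ℝ) - 1 = 0 by ring]
    rw [abs_neg, abs_of_pos he0, abs_zero]
    exact max_le her hr.le
  · rw [linf_norm]
    simp only [PiLp.add_apply, PiLp.smul_apply, WithLp.equiv_symm_apply, PiLp.toLp_apply,
      Matrix.cons_val_zero, Matrix.cons_val_one, Matrix.head_cons, smul_eq_mul,
      mul_zero, mul_one, one_mul, add_zero, Real.norm_eq_abs]
    rw [show (1 : ℝ) + -e = 1 - e by ring]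
    rw [abs_of_nonneg (by linarith), abs_one]
    exact max_eq_right (by linarith)
  · rw [linf_norm]
    simp only [PiLp.add_apply, PiLp.smul_apply, WithLp.equiv_symm_apply, PiLp.toLp_apply,
      Matrix.cons_val_zero, Matrix.cons_val_one, Matrix.head_cons, smul_eq_mul,
      mul_zero, mul_one, one_mul, add_zero, Real.norm_eq_abs]
    have h1 : (1:ℝ) < |1 + -e * μ * -1| := by
      rw [show (1 : ℝ) + -e * μ * -1 = 1 + e * μ by ring,
        abs_of_pos (by nlinarith)]
      nlinarith
    calc (1:ℝ) < |1 + -e * μ * -1| := h1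
      _ ≤ _ := le_max_right _ _
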